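/- Completeness for a single-filter single-sort preference: for the preference relation x ⪰ y defined as ¬(b(y) ≥ v) ∨ (b(x) ≥ v ∧ a(x) ≤ a(y)), the procedure P = sort^i_a ∘ filter_{b ≥ v} realizes ⪰, i.e., for all distinct x, y ∈ X, x ⪰ y iff there exists a list l containing x and y such that in P(l) either y is absent or x occurs before y. -/

import Mathlib

theorem completeness_filter_sort {X V : Type*} [LinearOrder V] (a b : X → V) (v : V)
    (x y : X) (hxy : x ≠ y) :
    (¬ (v ≤ b y) ∨ (v ≤ b x ∧ a x ≤ a y)) ↔
    (∃ l : List X, x ∈ l ∧ y ∈ l ∧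
      (let l' := List.mergeSort (List.filter (fun z => decide (v ≤ b z)) l)
        (fun p q => decide (a p ≤ a q));
       ∀ j : ℕ, l'[j]? = some y → ∃ i < j, l'[i]? = some x)) := by
  constructor
  · rintro (hby | ⟨hbx, haxy⟩)
    · refine ⟨[x, y], by simp, by simp, fun j hj => ?_⟩
      exfalso
      have : y ∈ List.mergeSort (List.filter (fun z => decide (v ≤ b z)) [x, y])
          (fun p q => decide (a p ≤ a q)) := List.mem_of_getElem? hj
      rw [List.mem_mergeSort, List.mem_filter] at this
      exact hby (by simpa using this.2)
    · refine ⟨[x, y], by simp, by simp, fun j hj => ?_⟩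
      by_cases hby : v ≤ b y
      · have hfil : List.filter (fun z => decide (v ≤ b z)) [x, y] = [x, y] := by
          simp [List.filter, hbx, hby]
        have hms : List.mergeSort [x, y] (fun p q => decide (a p ≤ a q)) = [x, y] := by
          simp [List.mergeSort, List.merge, haxy]
        rw [hfil, hms] at hj
        simp only [hfil, hms]
        match j, hj with
        | 0, hj => exact absurd (by simpa using hj) hxy
        | 1, hj => exact ⟨0, by norm_num, rfl⟩
        | (n+2), hj => simp at hj
      · exfalso
        have : y ∈ List.mergeSort (List.filter (fun z => decide (v ≤ b z)) [x, y])
            (fun p q => decide (a p ≤ a q)) := List.mem_of_getElem? hj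
        rw [List.mem_mergeSort, List.mem_filter] at this
        exact hby (by simpa using this.2)
  · rintro ⟨l, hx, hy, h⟩
    by_cases hby : v ≤ b y
    · right
      set l' := List.mergeSort (List.filter (fun z => decide (v ≤ b z)) l)
        (fun p q => decide (a p ≤ a q)) with hl'
      have hyl' : y ∈ l' := by
        rw [hl', List.mem_mergeSort, List.mem_filter]
        exact ⟨hy, by simpa⟩
      obtain ⟨j, hjget⟩ := List.mem_iff_get.1 hyl'
      have hj' : l'[(j : ℕ)]? = some y := by
        rw [List.getElem?_eq_some_iff]; exact ⟨j.2, hjget⟩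
      obtain ⟨i, hij, hi⟩ := h (j : ℕ) hj'
      rw [List.getElem?_eq_some_iff] at hi
      obtain ⟨hilen, higet⟩ := hi
      have hxl' : x ∈ l' := by
        rw [← higet]; exact List.getElem_mem _
      have hbx : v ≤ b x := by
        rw [hl', List.mem_mergeSort, List.mem_filter] at hxl'
        simpa using hxl'.2
      refine ⟨hbx, ?_⟩
      have hsorted := List.pairwise_mergeSort
        (le := fun p q : X => decide (a p ≤ a q))
        (fun p q r hpq hqr => by
          simp only [decide_eq_true_eq] at *; exact le_trans hpq hqr)
        (fun p q => by simp [le_total])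
        (List.filter (fun z => decide (v ≤ b z)) l)
      rw [← hl'] at hsorted
      rw [List.pairwise_iff_get] at hsorted
      have := hsorted ⟨i, hilen⟩ j (by exact hij)
      rw [hjget, List.get_eq_getElem, higet] at this
      simpa using this
    · left; exact hby
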